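/- For any connected graph Γ and any integer n ≥ 3, src(Γ □ C_n) ≤ ⌈(n−2)/2⌉ + src(Γ □ C_2). -/

import Mathlib

open SimpleGraph Finset

/-- A coloring `c` of (potential) edges is a rainbow coloring of `G` if every pair of
distinct vertices is joined by a path whose edges have pairwise distinct colors. -/
def SimpleGraph.IsRainbowColoring {V α : Type*} (G : SimpleGraph V) (c : Sym2 V → α) : Prop :=
  ∀ u v : V, u ≠ v → ∃ p : G.Walk u v, p.IsPath ∧ (p.edges.map c).Nodup

/-- A strong rainbow coloring: every pair of distinct vertices is joined by a rainbow
path whose length equals the distance between them. -/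
def SimpleGraph.IsStrongRainbowColoring {V α : Type*} (G : SimpleGraph V) (c : Sym2 V → α) : Prop :=
  ∀ u v : V, u ≠ v → ∃ p : G.Walk u v, p.IsPath ∧ p.length = G.dist u v ∧ (p.edges.map c).Nodup

/-- The rainbow connection number: least number of colors of a rainbow coloring. -/
noncomputable def SimpleGraph.rc {V : Type*} (G : SimpleGraph V) : ℕ :=
  sInf {k : ℕ | ∃ c : Sym2 V → Fin k, G.IsRainbowColoring c}

/-- The strong rainbow connection number: least number of colors of a strong rainbow coloring. -/
noncomputable def SimpleGraph.src {V : Type*} (G : SimpleGraph V) : ℕ :=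
  sInf {k : ℕ | ∃ c : Sym2 V → Fin k, G.IsStrongRainbowColoring c}

/-- The toroidal mesh `C_{n 0} □ ⋯ □ C_{n (r-1)}`: the Cartesian (box) product of the
cycles `cycleGraph (n i)`. -/
def toroidalMesh {r : ℕ} (n : Fin r → ℕ) : SimpleGraph (∀ i, Fin (n i)) :=
  SimpleGraph.fromRel fun u v =>
    ∃ i, (cycleGraph (n i)).Adj (u i) (v i) ∧ ∀ j, j ≠ i → u j = v j

namespace SRCAux

set_option linter.unusedSectionVars false
set_option linter.unusedVariables false
open Fin.NatCast Fin.CommRing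

variable {V W : Type*} {G : SimpleGraph V} {H : SimpleGraph W}


variable {V W : Type*} {G : SimpleGraph V} {H : SimpleGraph W}

lemma walk_lb (hG : G.Connected) (hH : H.Connected) :
    ∀ {x y : V × W} (p : (G □ H).Walk x y),
      G.dist x.1 y.1 + H.dist x.2 y.2 ≤ p.length := by
  intro x y p
  induction p with
  | nil => simp
  | @cons x z y h q ih =>
    rw [SimpleGraph.Walk.length_cons]
    rcases h with ⟨hadj, he⟩ | ⟨hadj, he⟩
    · have h1 : G.dist x.1 y.1 ≤ G.dist x.1 z.1 + G.dist z.1 y.1 := hG.dist_triangle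
      have h2 : G.dist x.1 z.1 = 1 := SimpleGraph.dist_eq_one_iff_adj.mpr hadj
      have h3 : H.dist x.2 y.2 = H.dist z.2 y.2 := by rw [he]
      omega
    · have h1 : H.dist x.2 y.2 ≤ H.dist x.2 z.2 + H.dist z.2 y.2 := hH.dist_triangle
      have h2 : H.dist x.2 z.2 = 1 := SimpleGraph.dist_eq_one_iff_adj.mpr hadj
      have h3 : G.dist x.1 y.1 = G.dist z.1 y.1 := by rw [he]
      omega

lemma boxProd_dist (hG : G.Connected) (hH : H.Connected) (u v : V) (a b : W) :
    (G □ H).dist (u, a) (v, b) = G.dist u v + H.dist a b := by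
  apply le_antisymm
  · obtain ⟨p, hp⟩ := hG.exists_walk_length_eq_dist u v
    obtain ⟨q, hq⟩ := hH.exists_walk_length_eq_dist a b
    have := SimpleGraph.dist_le ((p.boxProdLeft H a).append (q.boxProdRight G v))
    rw [SimpleGraph.Walk.length_append] at this
    rw [← hp, ← hq]
    exact this.trans (le_of_eq (congrArg₂ (· + ·) (SimpleGraph.Walk.length_map _ _)
      (SimpleGraph.Walk.length_map _ _)))
  · obtain ⟨p, hp⟩ := ((hG.boxProd hH).exists_walk_length_eq_dist (u, a) (v, b))
    rw [← hp]
    exact walk_lb hG hH p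

lemma flat (hG : G.Connected) (hH : H.Connected) :
    ∀ {x y : V × W} (p : (G □ H).Walk x y), p.length = G.dist x.1 y.1 →
      x.2 = y.2 ∧ ∃ q : G.Walk x.1 y.1, q.length = G.dist x.1 y.1 ∧
        p.edges = q.edges.map (Sym2.map (fun t => (t, x.2))) := by
  intro x y p
  induction p with
  | nil =>
    intro _
    exact ⟨rfl, SimpleGraph.Walk.nil, by simp [SimpleGraph.dist_self], rfl⟩
  | @cons x z y h q ih =>
    intro hlen
    obtain ⟨x1, x2⟩ := x
    obtain ⟨z1, z2⟩ := z
    obtain ⟨y1, y2⟩ := y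
    rw [SimpleGraph.Walk.length_cons] at hlen
    have hA := walk_lb hG hH q
    simp only at hA hlen ih ⊢
    rcases SimpleGraph.boxProd_adj.mp h with ⟨hadj, he⟩ | ⟨hadj, he⟩
    · -- G-edge
      simp only at hadj he
      subst he
      have h2 : G.dist x1 y1 ≤ G.dist x1 z1 + G.dist z1 y1 := hG.dist_triangle
      have h3 : G.dist x1 z1 = 1 := SimpleGraph.dist_eq_one_iff_adj.mpr hadj
      have hq : q.length = G.dist z1 y1 := by omega
      obtain ⟨h22, q', hq', hedges⟩ := ih hq
      subst h22
      refine ⟨rfl, SimpleGraph.Walk.cons hadj q', by rw [SimpleGraph.Walk.length_cons]; omega, ?_⟩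
      rw [SimpleGraph.Walk.edges_cons, SimpleGraph.Walk.edges_cons, List.map_cons, hedges,
        Sym2.map_pair_eq]
    · -- H-edge: impossible
      simp only at hadj he
      have h2 : H.dist x2 z2 = 1 := SimpleGraph.dist_eq_one_iff_adj.mpr hadj
      have h3 : G.dist x1 y1 = G.dist z1 y1 := by rw [he]
      omega

lemma cross (hG : G.Connected) (hH : H.Connected) :
    ∀ {x y : V × W} (p : (G □ H).Walk x y), p.length = G.dist x.1 y.1 + 1 → H.Adj x.2 y.2 →
      ∃ (w : V) (q₁ : G.Walk x.1 w) (q₂ : G.Walk w y.1),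
        q₁.length + q₂.length = G.dist x.1 y.1 ∧
        p.edges = q₁.edges.map (Sym2.map (fun t => (t, x.2)))
          ++ s((w, x.2), (w, y.2)) :: q₂.edges.map (Sym2.map (fun t => (t, y.2))) := by
  intro x y p
  induction p with
  | nil => intro hlen _; simp at hlen
  | @cons x z y h q ih =>
    intro hlen hadjH
    obtain ⟨x1, x2⟩ := x
    obtain ⟨z1, z2⟩ := z
    obtain ⟨y1, y2⟩ := y
    rw [SimpleGraph.Walk.length_cons] at hlen
    have hA := walk_lb hG hH q
    simp only at hA hlen ih hadjH ⊢
    have hd1 : H.dist x2 y2 = 1 := SimpleGraph.dist_eq_one_iff_adj.mpr hadjH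
    rcases SimpleGraph.boxProd_adj.mp h with ⟨hadj, he⟩ | ⟨hadj, he⟩
    · -- G-edge first
      simp only at hadj he
      subst he
      have h2 : G.dist x1 y1 ≤ G.dist x1 z1 + G.dist z1 y1 := hG.dist_triangle
      have h3 : G.dist x1 z1 = 1 := SimpleGraph.dist_eq_one_iff_adj.mpr hadj
      have hq : q.length = G.dist z1 y1 + 1 := by omega
      obtain ⟨w, q₁, q₂, hlen', hedges⟩ := ih hq hadjH
      refine ⟨w, SimpleGraph.Walk.cons hadj q₁, q₂, by rw [SimpleGraph.Walk.length_cons]; omega, ?_⟩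
      rw [SimpleGraph.Walk.edges_cons, hedges, SimpleGraph.Walk.edges_cons, List.map_cons,
        List.cons_append, Sym2.map_pair_eq]
    · -- H-edge first: the rest must be flat in layer y2
      simp only at hadj he
      subst he
      have h2 : H.dist x2 z2 = 1 := SimpleGraph.dist_eq_one_iff_adj.mpr hadj
      have hz2 : H.dist z2 y2 = 0 := by omega
      have hz2' : z2 = y2 := (hH.dist_eq_zero_iff).mp hz2
      subst hz2'
      have hq : q.length = G.dist x1 y1 := by omega
      obtain ⟨_, q', hq', hedges⟩ := flat hG hH q hq
      exact ⟨x1, SimpleGraph.Walk.nil, q', by simpa using hq',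
        by rw [SimpleGraph.Walk.edges_cons, hedges]; simp⟩


variable {n : ℕ} [NeZero n]


variable {n : ℕ} [NeZero n]

lemma val_add_one_of (hn : 2 ≤ n) (w : Fin n) :
    (w + 1).val = if w.val + 1 = n then 0 else w.val + 1 := by
  have h1 : ((1 : Fin n) : ℕ) = 1 := by rw [Fin.val_one']; exact Nat.mod_eq_of_lt (by omega)
  have h2 : (w + 1).val = (w.val + 1) % n := by rw [Fin.val_add, h1]
  have h3 : w.val < n := w.is_lt
  rcases Nat.lt_or_ge (w.val + 1) n with h | h
  · rw [h2, Nat.mod_eq_of_lt h]; split_ifs <;> omega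
  · have he : w.val + 1 = n := by omega
    rw [h2, he, Nat.mod_self]; split_ifs <;> omega

lemma val_sub_one_of (hn : 2 ≤ n) (w : Fin n) :
    (w - 1).val = if w.val = 0 then n - 1 else w.val - 1 := by
  have h := val_add_one_of hn (w - 1)
  rw [sub_add_cancel] at h
  have h3 : (w - 1).val < n := (w - 1).is_lt
  have h4 : w.val < n := w.is_lt
  split_ifs at h ⊢ <;> omega

lemma val_neg_of (hn : 2 ≤ n) (w : Fin n) :
    w.val + (-w).val = if w = 0 then 0 else n := by
  split_ifs with h
  · rw [h]; simp
  · have h1 : (-w).val = (n - w.val) % n := by rw [Fin.neg_def]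
    have h2 : w.val ≠ 0 := fun h' => h (Fin.ext (by rw [h', Fin.val_zero]))
    have h4 : w.val < n := w.is_lt
    rw [h1, Nat.mod_eq_of_lt (by omega)]
    omega

lemma eq_add_one_of_sub (hn : 2 ≤ n) {z i : Fin n} (h : (z - i).val = 1) : z = i + 1 := by
  have h1 : z - i = 1 := Fin.ext (by rw [h, Fin.val_one']; exact (Nat.mod_eq_of_lt (by omega)).symm)
  exact (sub_eq_iff_eq_add.mp h1).trans (add_comm 1 i)

lemma cycle_walk_lb (hn : 2 ≤ n) :
    ∀ {i j : Fin n} (p : (cycleGraph n).Walk i j), min (j - i).val (i - j).val ≤ p.length := by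
  intro i j p
  induction p with
  | nil => simp [sub_self]
  | @cons i z j h q ih =>
    rw [SimpleGraph.Walk.length_cons]
    have h4 : (j - i).val < n := (j - i).is_lt
    have h5 : (i - j).val < n := (i - j).is_lt
    have h6 : (j - z).val < n := (j - z).is_lt
    have h7 : (z - j).val < n := (z - j).is_lt
    rcases cycleGraph_adj'.mp h with h1 | h1
    · -- i - z = 1, i.e. i = z + 1
      have hz : i = z + 1 := eq_add_one_of_sub hn h1
      subst hz
      have e1 : j - (z + 1) = (j - z) - 1 := by ring
      have e2 : (z + 1) - j = (z - j) + 1 := by ring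
      rw [e1, e2, val_sub_one_of hn, val_add_one_of hn]
      have e3 := val_neg_of hn (j - z)
      rw [neg_sub] at e3
      by_cases h0 : j - z = 0
      · rw [if_pos h0] at e3
        have hv0 : (j - z).val = 0 := by rw [h0]; simp
        have hv1 : (z - j).val = 0 := by omega
        rw [hv0, hv1] at ih ⊢
        split_ifs <;> omega
      · rw [if_neg h0] at e3
        have hv0 : (j - z).val ≠ 0 := fun h' => h0 (Fin.ext (by rw [h', Fin.val_zero]))
        split_ifs <;> omega
    · -- z - i = 1, i.e. z = i + 1
      have hz : z = i + 1 := eq_add_one_of_sub hn h1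
      subst hz
      have e1 : j - i = (j - (i + 1)) + 1 := by ring
      have e2 : i - j = ((i + 1) - j) - 1 := by ring
      rw [e1, e2, val_sub_one_of hn, val_add_one_of hn]
      have e3 := val_neg_of hn (j - (i + 1))
      rw [neg_sub] at e3
      by_cases h0 : j - (i + 1) = 0
      · rw [if_pos h0] at e3
        have hv0 : (j - (i + 1)).val = 0 := by rw [h0]; simp
        have hv1 : ((i + 1) - j).val = 0 := by omega
        rw [hv0, hv1] at ih ⊢
        split_ifs <;> omega
      · rw [if_neg h0] at e3
        have hv0 : (j - (i + 1)).val ≠ 0 := fun h' => h0 (Fin.ext (by rw [h', Fin.val_zero]))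
        split_ifs <;> omega

lemma adj_succ (hn : 2 ≤ n) (i : Fin n) : (cycleGraph n).Adj i (i + 1) := by
  apply cycleGraph_adj'.mpr
  right
  rw [add_sub_cancel_left, Fin.val_one']
  exact Nat.mod_eq_of_lt (by omega)

/-- The clockwise walk of length `m` starting at `i`. -/
def walkCW (hn : 2 ≤ n) (i : Fin n) : (m : ℕ) → (cycleGraph n).Walk i (i + m)
  | 0 => SimpleGraph.Walk.nil.copy rfl (by simp)
  | m + 1 => ((walkCW hn (i + 1) m).cons (adj_succ hn i)).copy rfl (by push_cast; ring)

lemma walkCW_length (hn : 2 ≤ n) (m : ℕ) : ∀ (i : Fin n), (walkCW hn i m).length = m := by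
  induction m with
  | zero => intro i; simp [walkCW]
  | succ m ih => intro i; simp [walkCW, ih]

lemma walkCW_edges (hn : 2 ≤ n) (m : ℕ) : ∀ (i : Fin n),
    (walkCW hn i m).edges
      = (List.range m).map (fun t : ℕ => s(i + (t : Fin n), i + (t : Fin n) + 1)) := by
  induction m with
  | zero => intro i; simp [walkCW]
  | succ m ih =>
    intro i
    rw [walkCW, SimpleGraph.Walk.edges_copy, SimpleGraph.Walk.edges_cons, ih,
      List.range_succ_eq_map, List.map_cons, List.map_map]
    congr 1
    · norm_num
    · apply List.map_congr_left
      intro t _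
      have e1 : i + ((t + 1 : ℕ) : Fin n) = i + 1 + (t : Fin n) := by push_cast; ring
      simp only [Function.comp_apply, Nat.succ_eq_add_one, e1]

lemma cycle_connected (hn : 2 ≤ n) : (cycleGraph n).Connected := by
  obtain ⟨m, rfl⟩ : ∃ m, n = m + 1 := ⟨n - 1, by omega⟩
  exact cycleGraph_connected

lemma cycle_dist (hn : 2 ≤ n) (i j : Fin n) :
    (cycleGraph n).dist i j = min (j - i).val (i - j).val := by
  apply le_antisymm
  · apply le_min
    · have := SimpleGraph.dist_le ((walkCW hn i (j - i).val).copy rfl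
        (by rw [Fin.cast_val_eq_self, add_sub_cancel]))
      rwa [SimpleGraph.Walk.length_copy, walkCW_length] at this
    · rw [SimpleGraph.dist_comm]
      have := SimpleGraph.dist_le ((walkCW hn j (i - j).val).copy rfl
        (by rw [Fin.cast_val_eq_self, add_sub_cancel]))
      rwa [SimpleGraph.Walk.length_copy, walkCW_length] at this
  · obtain ⟨p, hp⟩ := (cycle_connected hn).exists_walk_length_eq_dist i j
    rw [← hp]
    exact cycle_walk_lb hn p

lemma succ_ne (hn : 2 ≤ n) (ℓ : Fin n) : ℓ + 1 ≠ ℓ := by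
  intro h
  have h1 : ℓ + 1 = ℓ + 0 := by rw [h, add_zero]
  have h2 : (1 : Fin n) = 0 := by exact add_left_cancel h1
  have := congrArg Fin.val h2
  rw [Fin.val_one', Nat.mod_eq_of_lt (by omega)] at this
  simp at this

section Col

variable {V : Type*} {k : ℕ} (c₂ : Sym2 (V × Fin 2) → Fin k)

/-- Fresh color index of the cycle edge `{w, w+1}` (natural number version). -/
def freshNat (n w : ℕ) : ℕ := if w < (n + 1) / 2 - 1 then w else w - (n + 1) / 2

lemma freshNat_lt (hn : 3 ≤ n) (w : ℕ) (hw : w < n) (h1 : w ≠ (n + 1) / 2 - 1)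
    (h2 : w ≠ n - 1) : freshNat n w < (n - 1) / 2 := by
  unfold freshNat; split_ifs <;> omega

/-- Layer map `Fin n → Fin 2`. -/
def phi (n : ℕ) (ℓ : Fin n) : Fin 2 := if ℓ.val < (n + 1) / 2 then 0 else 1

/-- Color of cycle edge `{t, t+1}` at vertex `x`. -/
def cyc (hn : 3 ≤ n) (x : V) (t : Fin n) : Fin ((n - 1) / 2) ⊕ Fin k :=
  if t.val = (n + 1) / 2 - 1 ∨ t.val = n - 1 then Sum.inr (c₂ s((x, 0), (x, 1)))
  else Sum.inl ⟨freshNat n t.val % ((n - 1) / 2), Nat.mod_lt _ (by omega)⟩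

open scoped Classical in
noncomputable def colF (hn : 3 ≤ n) (p q : V × Fin n) : Fin ((n - 1) / 2) ⊕ Fin k :=
  if p.2 = q.2 then Sum.inr (c₂ s((p.1, phi n p.2), (q.1, phi n p.2)))
  else if p.1 = q.1 then
    (if (q.2 - p.2).val = 1 then cyc c₂ hn p.1 p.2
     else if (p.2 - q.2).val = 1 then cyc c₂ hn p.1 q.2
     else Sum.inl ⟨0, by omega⟩)
  else Sum.inl ⟨0, by omega⟩

lemma colF_symm (hn : 3 ≤ n) (p q : V × Fin n) : colF c₂ hn p q = colF c₂ hn q p := by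
  unfold colF
  by_cases h1 : p.2 = q.2
  · rw [if_pos h1, if_pos h1.symm, h1, Sym2.eq_swap]
  · rw [if_neg h1, if_neg (Ne.symm h1)]
    by_cases h2 : p.1 = q.1
    · rw [if_pos h2, if_pos h2.symm, h2]
      have hex : ¬((q.2 - p.2).val = 1 ∧ (p.2 - q.2).val = 1) := by
        rintro ⟨ha, hb⟩
        have h3 := val_neg_of (by omega) (q.2 - p.2)
        rw [neg_sub] at h3
        have h4 : ¬(q.2 - p.2) = 0 := by
          intro h0; rw [h0] at ha; simp at ha
        rw [if_neg h4] at h3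
        omega
      by_cases ha : (q.2 - p.2).val = 1
      · rw [if_pos ha, if_neg (fun hb => hex ⟨ha, hb⟩), if_pos ha]
      · rw [if_neg ha]
        by_cases hb : (p.2 - q.2).val = 1
        · rw [if_pos hb, if_pos hb]
        · rw [if_neg hb, if_neg hb, if_neg ha]
    · rw [if_neg h2, if_neg (fun h => h2 h.symm)]

/-- The strong rainbow coloring of `G □ Cₙ`. -/
noncomputable def col (hn : 3 ≤ n) : Sym2 (V × Fin n) → Fin ((n - 1) / 2) ⊕ Fin k :=
  Sym2.lift ⟨fun p q => colF c₂ hn p q, colF_symm c₂ hn⟩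

lemma col_layer (hn : 3 ≤ n) (x y : V) (ℓ : Fin n) :
    col c₂ hn s((x, ℓ), (y, ℓ)) = Sum.inr (c₂ s((x, phi n ℓ), (y, phi n ℓ))) := by
  classical
  simp [col, colF]

lemma col_cyc (hn : 3 ≤ n) (x : V) (t : Fin n) :
    col c₂ hn s((x, t), (x, t + 1)) = cyc c₂ hn x t := by
  have h1 : ¬(t : Fin n) = t + 1 := fun h => succ_ne (by omega) t h.symm
  have h2 : ((t + 1) - t).val = 1 := by
    rw [add_sub_cancel_left, Fin.val_one', Nat.mod_eq_of_lt (by omega)]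
  classical
  simp only [col, Sym2.lift_mk, colF, if_neg h1, if_pos rfl, if_pos h2]
  simp

lemma col_cyc_noncross (hn : 3 ≤ n) (x : V) (t : Fin n)
    (h : ¬(t.val = (n + 1) / 2 - 1 ∨ t.val = n - 1)) :
    col c₂ hn s((x, t), (x, t + 1)) = Sum.inl ⟨freshNat n t.val % ((n - 1) / 2),
      Nat.mod_lt _ (by omega)⟩ := by
  rw [col_cyc c₂ hn, cyc, if_neg h]

lemma col_cyc_cross (hn : 3 ≤ n) (x : V) (t : Fin n)
    (h : t.val = (n + 1) / 2 - 1 ∨ t.val = n - 1) :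
    col c₂ hn s((x, t), (x, t + 1)) = Sum.inr (c₂ s((x, 0), (x, 1))) := by
  rw [col_cyc c₂ hn, cyc, if_pos h]

end Col

lemma phi_succ_of_not_cross (hn : 3 ≤ n) {ℓ : Fin n}
    (h : ¬(ℓ.val = (n + 1) / 2 - 1 ∨ ℓ.val = n - 1)) : phi n (ℓ + 1) = phi n ℓ := by
  push_neg at h
  have h2 : ℓ.val < n := ℓ.is_lt
  unfold phi
  rw [val_add_one_of (by omega)]
  split_ifs <;> first | rfl | omega

lemma phi_cross_ne (hn : 3 ≤ n) {c : Fin n}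
    (hc : c.val = (n + 1) / 2 - 1 ∨ c.val = n - 1) : phi n (c + 1) ≠ phi n c := by
  have h2 : c.val < n := c.is_lt
  unfold phi
  rw [val_add_one_of (by omega)]
  rcases hc with hc | hc <;> rw [hc] <;> split_ifs <;> simp_all <;> omega

lemma phi_const (hn : 3 ≤ n) (ℓ : Fin n) (s : ℕ)
    (hnc : ∀ t < s, ¬((ℓ + (t : Fin n)).val = (n + 1) / 2 - 1 ∨ (ℓ + (t : Fin n)).val = n - 1)) :
    phi n (ℓ + (s : Fin n)) = phi n ℓ := by
  induction s with
  | zero => norm_num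
  | succ s ih =>
    have e1 : ℓ + ((s + 1 : ℕ) : Fin n) = (ℓ + (s : Fin n)) + 1 := by push_cast; ring
    rw [e1, phi_succ_of_not_cross hn (hnc s (by omega))]
    exact ih (fun t ht => hnc t (by omega))

lemma val_add_cast (ℓ : Fin n) (t : ℕ) (h : ℓ.val + t < n) :
    (ℓ + (t : Fin n)).val = ℓ.val + t := by
  rw [Fin.val_add, Fin.val_natCast, Nat.mod_eq_of_lt (show t < n by omega),
    Nat.mod_eq_of_lt h]

lemma arc_no_wrap (hn : 3 ≤ n) (ℓ : Fin n) (s : ℕ)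
    (h : ∀ t < s, (ℓ + (t : Fin n)).val ≠ n - 1) :
    ∀ t ≤ s, (ℓ + (t : Fin n)).val = ℓ.val + t := by
  intro t ht
  have hl : ℓ.val < n := ℓ.is_lt
  have hlt : ℓ.val + t < n := by
    by_contra h'
    have ht0 : n - 1 - ℓ.val < t := by omega
    have := h (n - 1 - ℓ.val) (by omega)
    rw [val_add_cast ℓ _ (by omega)] at this
    omega
  exact val_add_cast ℓ t hlt

lemma val_sub (hn : 2 ≤ n) (x y : Fin n) :
    (x - y).val = if y.val ≤ x.val then x.val - y.val else n + x.val - y.val := by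
  by_cases h0 : y = 0
  · subst h0; simp
  · have h := val_neg_of hn y
    rw [if_neg h0] at h
    have h2 : y.val ≠ 0 := fun h' => h0 (Fin.ext (by rw [h', Fin.val_zero]))
    have h3 : y.val < n := y.is_lt
    have h4 : x.val < n := x.is_lt
    rw [sub_eq_add_neg, Fin.val_add]
    split_ifs with h5
    · have e : x.val + (-y).val = (x.val - y.val) + n := by omega
      rw [e, Nat.add_mod_right, Nat.mod_eq_of_lt (by omega)]
    · rw [Nat.mod_eq_of_lt (by omega)]
      omega

lemma cross_unique (hn : 3 ≤ n) (i : Fin n) (d : ℕ) (hd2 : 2 * d ≤ n) {t₁ t₂ : ℕ}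
    (h₁ : t₁ < d) (h₂ : t₂ < d)
    (hc₁ : (i + (t₁ : Fin n)).val = (n + 1) / 2 - 1 ∨ (i + (t₁ : Fin n)).val = n - 1)
    (hc₂ : (i + (t₂ : Fin n)).val = (n + 1) / 2 - 1 ∨ (i + (t₂ : Fin n)).val = n - 1) :
    t₁ = t₂ := by
  -- both crossings in a short arc must coincide
  have key : ∀ s₁ s₂ : ℕ, s₁ ≤ s₂ → s₂ < d →
      ((i + (s₁ : Fin n)).val = (n + 1) / 2 - 1 ∨ (i + (s₁ : Fin n)).val = n - 1) →
      ((i + (s₂ : Fin n)).val = (n + 1) / 2 - 1 ∨ (i + (s₂ : Fin n)).val = n - 1) →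
      s₁ = s₂ := by
    intro s₁ s₂ hle hlt hcc₁ hcc₂
    have hdiff : ((i + (s₂ : Fin n)) - (i + (s₁ : Fin n))).val = s₂ - s₁ := by
      have e : (i + (s₂ : Fin n)) - (i + (s₁ : Fin n)) = ((s₂ - s₁ : ℕ) : Fin n) := by
        rw [Nat.cast_sub hle]; ring
      rw [e, Fin.val_natCast, Nat.mod_eq_of_lt (by omega)]
    rw [val_sub (by omega)] at hdiff
    rcases hcc₁ with hv₁ | hv₁ <;> rcases hcc₂ with hv₂ | hv₂ <;>
      rw [hv₁, hv₂] at hdiff <;> split_ifs at hdiff <;> omega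
  rcases Nat.le_total t₁ t₂ with h | h
  · exact key t₁ t₂ h h₂ hc₁ hc₂
  · exact (key t₂ t₁ h h₁ hc₂ hc₁).symm


lemma fin2_eq : ∀ {a b c : Fin 2}, a ≠ b → a ≠ c → b = c := by decide

lemma fin2_cases : ∀ {s t : Fin 2}, s ≠ t → (s = 0 ∧ t = 1) ∨ (s = 1 ∧ t = 0) := by decide

lemma fin2_adj : ∀ {s t : Fin 2}, s ≠ t → (cycleGraph 2).Adj s t := by decide

lemma dist2 (hG : G.Connected) (u v : V) (s t : Fin 2) :
    (G □ cycleGraph 2).dist (u, s) (v, t) = G.dist u v + (if s = t then 0 else 1) := by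
  rw [boxProd_dist hG (cycle_connected (n := 2) (by omega))]
  congr 1
  split_ifs with h
  · rw [h, SimpleGraph.dist_self]
  · exact SimpleGraph.dist_eq_one_iff_adj.mpr (fin2_adj h)

/-- The homomorphism folding `G □ C₂` onto the two layers `c`, `c+1` of `G □ Cₙ`. -/
def crossHom (hn : 3 ≤ n) (c : Fin n) : (G □ cycleGraph 2) →g (G □ cycleGraph n) where
  toFun := fun x => (x.1, if x.2 = phi n c then c else c + 1)
  map_rel' := by
    rintro ⟨x1, x2⟩ ⟨y1, y2⟩ h
    apply SimpleGraph.boxProd_adj.mpr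
    rcases SimpleGraph.boxProd_adj.mp h with ⟨ha, he⟩ | ⟨ha, he⟩
    · simp only at ha he ⊢
      left
      exact ⟨ha, by rw [he]⟩
    · simp only at ha he ⊢
      right
      have hne : x2 ≠ y2 := ha.ne
      refine ⟨?_, he⟩
      by_cases hx : x2 = phi n c
      · have hy : ¬ y2 = phi n c := fun hy => hne (hx.trans hy.symm)
        rw [if_pos hx, if_neg hy]
        exact adj_succ (by omega) c
      · have hy : y2 = phi n c := fin2_eq hne hx
        rw [if_neg hx, if_pos hy]
        exact (adj_succ (by omega) c).symm

lemma key {k : ℕ} {c₂ : Sym2 (V × Fin 2) → Fin k} (hG : G.Connected) (hn : 3 ≤ n)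
    (hc₂ : (G □ cycleGraph 2).IsStrongRainbowColoring c₂)
    (u v : V) (i j : Fin n) (hd : (j - i).val ≤ (i - j).val) :
    ∃ Wk : (G □ cycleGraph n).Walk (u, i) (v, j),
      Wk.length = G.dist u v + (j - i).val ∧ ((Wk.edges.map (col c₂ hn)).Nodup) := by
  classical
  have hn2 : 2 ≤ n := by omega
  set a := (n + 1) / 2 with ha
  set m' := (n - 1) / 2 with hm'
  have hm'pos : 0 < m' := by omega
  set d := (j - i).val with hdd
  have hdn : d < n := (j - i).is_lt
  have hivn : i.val < n := i.is_lt
  have hij : i + (d : Fin n) = j := by rw [hdd, Fin.cast_val_eq_self, add_sub_cancel]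
  have h2d : 2 * d ≤ n := by
    by_cases h0 : j - i = 0
    · have hz : d = 0 := by rw [hdd, h0, Fin.val_zero]
      omega
    · have h3 := val_neg_of hn2 (j - i)
      rw [neg_sub, if_neg h0] at h3
      omega
  have flatpack : ∀ s : Fin 2, ∃ q : G.Walk u v, q.length = G.dist u v ∧
      (q.edges.map (fun e => c₂ (Sym2.map (fun x => (x, s)) e))).Nodup := by
    intro s
    by_cases huv : u = v
    · subst huv
      exact ⟨SimpleGraph.Walk.nil, by simp [SimpleGraph.dist_self], by simp⟩
    · obtain ⟨p₂, _, hl, hr⟩ := hc₂ (u, s) (v, s) (by simp [huv])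
      rw [dist2 hG, if_pos rfl, Nat.add_zero] at hl
      obtain ⟨_, q, hql, hedges⟩ := flat hG (cycle_connected (n := 2) (by omega)) p₂ hl
      refine ⟨q, hql, ?_⟩
      rw [hedges, List.map_map] at hr
      exact hr
  by_cases hcr : ∃ t, t < d ∧ ((i + (t : Fin n)).val = a - 1 ∨ (i + (t : Fin n)).val = n - 1)
  · -- crossing case
    obtain ⟨tc, htc, hcv⟩ := hcr
    have huniq : ∀ t, t < d → t ≠ tc →
        ¬((i + (t : Fin n)).val = a - 1 ∨ (i + (t : Fin n)).val = n - 1) :=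
      fun t ht hne hcross => hne (cross_unique hn i d h2d ht htc hcross hcv)
    set c : Fin n := i + (tc : Fin n) with hcdef
    set s₂ := d - tc - 1 with hs₂
    have hvalpre : ∀ t ≤ tc, (i + (t : Fin n)).val = i.val + t := by
      apply arc_no_wrap hn i tc
      intro t ht hv
      exact huniq t (by omega) (by omega) (Or.inr hv)
    have hcval : c.val = i.val + tc := hvalpre tc le_rfl
    have hidx : ∀ t : ℕ, (c + 1) + (t : Fin n) = i + ((tc + 1 + t : ℕ) : Fin n) := by
      intro t; rw [hcdef]; push_cast; ring
    have hpostnc : ∀ t, t < s₂ →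
        ¬(((c+1) + (t : Fin n)).val = a - 1 ∨ ((c+1) + (t : Fin n)).val = n - 1) := by
      intro t ht
      rw [hidx t]
      exact huniq (tc + 1 + t) (by omega) (by omega)
    have hvalpost : ∀ t ≤ s₂, ((c+1) + (t : Fin n)).val = (c+1).val + t := by
      apply arc_no_wrap hn (c+1) s₂
      intro t ht hv
      exact hpostnc t ht (Or.inr hv)
    have hc1val : (c + 1).val = if c.val + 1 = n then 0 else c.val + 1 := val_add_one_of hn2 c
    have hc1n : (c + 1).val < n := (c + 1).is_lt
    have hj2 : (c + 1) + (s₂ : Fin n) = j := by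
      have e : tc + 1 + s₂ = d := by omega
      rw [hidx s₂, e, hij]
    have hphic : phi n c = phi n i := by
      rw [hcdef]
      exact phi_const hn i tc (fun t ht => huniq t (by omega) (by omega))
    have hphij : phi n j = phi n (c + 1) := by
      rw [← hj2]
      exact phi_const hn (c + 1) s₂ hpostnc
    have hphine : phi n (c + 1) ≠ phi n c := phi_cross_ne hn hcv
    have hphinij : phi n i ≠ phi n j := by
      rw [hphij, ← hphic]
      exact fun h => hphine h.symm
    obtain ⟨p₂, _, hp₂len, hp₂rb⟩ := hc₂ (u, phi n i) (v, phi n j)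
      (by simp only [ne_eq, Prod.mk.injEq, not_and]; intro _; exact hphinij)
    rw [dist2 hG, if_neg hphinij] at hp₂len
    have eqmid1 : ((crossHom (G := G) hn c) (u, phi n i)) = (u, c) := by
      show ((u : V), if phi n i = phi n c then c else c + 1) = (u, c)
      rw [if_pos hphic.symm]
    have eqmid2 : ((crossHom (G := G) hn c) (v, phi n j)) = (v, c + 1) := by
      show ((v : V), if phi n j = phi n c then c else c + 1) = (v, c + 1)
      rw [if_neg (by rw [hphij]; exact hphine)]
    set pre : (G □ cycleGraph n).Walk (u, i) (u, c) :=
      ((walkCW hn2 i tc).map (SimpleGraph.boxProdRight G (cycleGraph n) u).toHom).copy (by simp)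
        (by rw [hcdef]; rfl) with hpre
    set mid : (G □ cycleGraph n).Walk (u, c) (v, c + 1) :=
      (p₂.map (crossHom (G := G) hn c)).copy eqmid1 eqmid2 with hmid
    set post : (G □ cycleGraph n).Walk (v, c + 1) (v, j) :=
      ((walkCW hn2 (c+1) s₂).map (SimpleGraph.boxProdRight G (cycleGraph n) v).toHom).copy (by simp)
        (by rw [hj2]; rfl) with hpost
    refine ⟨pre.append (mid.append post), ?_, ?_⟩
    · rw [SimpleGraph.Walk.length_append, SimpleGraph.Walk.length_append, hpre, hmid, hpost]
      simp only [SimpleGraph.Walk.length_copy, SimpleGraph.Walk.length_map]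
      rw [walkCW_length, walkCW_length, hp₂len]
      omega
    · -- the color lists
      have haveA : pre.edges.map (col c₂ hn)
          = (List.range tc).map (fun t : ℕ =>
              col c₂ hn s(((u : V), i + (t : Fin n)), (u, i + (t : Fin n) + 1))) := by
        rw [hpre, SimpleGraph.Walk.edges_copy, SimpleGraph.Walk.edges_map, walkCW_edges,
          List.map_map, List.map_map]
        rfl
      have haveC : post.edges.map (col c₂ hn)
          = (List.range s₂).map (fun t : ℕ =>
              col c₂ hn s(((v : V), (c+1) + (t : Fin n)), (v, (c+1) + (t : Fin n) + 1))) := by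
        rw [hpost, SimpleGraph.Walk.edges_copy, SimpleGraph.Walk.edges_map, walkCW_edges,
          List.map_map, List.map_map]
        rfl
      have haveB : mid.edges.map (col c₂ hn) = (p₂.edges.map c₂).map Sum.inr := by
        rw [hmid, SimpleGraph.Walk.edges_copy, SimpleGraph.Walk.edges_map, List.map_map,
          List.map_map]
        apply List.map_congr_left
        intro e he
        have hadj : e ∈ (G □ cycleGraph 2).edgeSet := p₂.edges_subset_edgeSet he
        revert hadj
        refine Sym2.ind (fun x y => ?_) e
        intro hadj
        rw [SimpleGraph.mem_edgeSet] at hadj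
        obtain ⟨x1, x2⟩ := x
        obtain ⟨y1, y2⟩ := y
        show col c₂ hn s(((x1 : V), if x2 = phi n c then c else c + 1),
          ((y1 : V), if y2 = phi n c then c else c + 1)) = Sum.inr (c₂ s((x1, x2), (y1, y2)))
        rcases SimpleGraph.boxProd_adj.mp hadj with ⟨hGxy, he2⟩ | ⟨hC2, he1⟩
        · simp only at he2
          subst he2
          have hphiL : phi n (if x2 = phi n c then c else c + 1) = x2 := by
            by_cases hx : x2 = phi n c
            · rw [if_pos hx]; exact hx.symm
            · rw [if_neg hx]
              exact fin2_eq (Ne.symm hphine) (fun h => hx h.symm)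
          rw [col_layer, hphiL]
        · simp only at he1 hC2
          subst he1
          have hne2 : x2 ≠ y2 := hC2.ne
          have hext : c₂ s(((x1 : V), (0 : Fin 2)), (x1, 1)) = c₂ s((x1, x2), (x1, y2)) := by
            rcases fin2_cases hne2 with ⟨h0, h1⟩ | ⟨h0, h1⟩
            · rw [h0, h1]
            · rw [h0, h1, Sym2.eq_swap]
          by_cases hx : x2 = phi n c
          · have hy : ¬ y2 = phi n c := fun hy => hne2 (hx.trans hy.symm)
            rw [if_pos hx, if_neg hy, col_cyc_cross c₂ hn x1 c hcv, hext]
          · have hy : y2 = phi n c := fin2_eq hne2 hx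
            rw [if_neg hx, if_pos hy, Sym2.eq_swap, col_cyc_cross c₂ hn x1 c hcv, hext]
      -- pointwise values of the arc colors
      have hFA : ∀ t, t < tc → col c₂ hn s(((u : V), i + (t : Fin n)), (u, i + (t : Fin n) + 1))
          = Sum.inl ⟨freshNat n (i.val + t) % m', Nat.mod_lt _ hm'pos⟩ := by
        intro t ht
        have hnc := huniq t (by omega) (by omega)
        have h := col_cyc_noncross c₂ hn u (i + (t : Fin n)) hnc
        rw [hvalpre t (by omega)] at h
        exact h
      have hFC : ∀ t, t < s₂ →
          col c₂ hn s(((v : V), (c+1) + (t : Fin n)), (v, (c+1) + (t : Fin n) + 1))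
          = Sum.inl ⟨freshNat n ((c+1).val + t) % m', Nat.mod_lt _ hm'pos⟩ := by
        intro t ht
        have h := col_cyc_noncross c₂ hn v ((c+1) + (t : Fin n)) (hpostnc t ht)
        rw [hvalpost t (by omega)] at h
        exact h
      -- numeric facts, by crossing position
      obtain ⟨hFA_lt, hFC_lt, hFA_inj, hFC_inj, hdisjAC⟩ :
          (∀ t < tc, freshNat n (i.val + t) < m') ∧
          (∀ t < s₂, freshNat n ((c+1).val + t) < m') ∧
          (∀ t₁, t₁ < tc → ∀ t₂, t₂ < tc →
            freshNat n (i.val + t₁) = freshNat n (i.val + t₂) → t₁ = t₂) ∧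
          (∀ t₁, t₁ < s₂ → ∀ t₂, t₂ < s₂ →
            freshNat n ((c+1).val + t₁) = freshNat n ((c+1).val + t₂) → t₁ = t₂) ∧
          (∀ t₁, t₁ < tc → ∀ t₂, t₂ < s₂ →
            freshNat n (i.val + t₁) ≠ freshNat n ((c+1).val + t₂)) := by
        rcases hcv with hca | hcb
        · -- crossing edge is {a-1, a}
          have hc1v : (c + 1).val = a := by rw [hc1val, hca]; split_ifs <;> omega
          refine ⟨?_, ?_, ?_, ?_, ?_⟩
          · intro t ht
            unfold freshNat
            rw [if_pos (by omega)]
            omega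
          · intro t ht
            rw [hc1v]
            unfold freshNat
            rw [if_neg (by omega)]
            omega
          · intro t₁ h₁ t₂ h₂ heq
            unfold freshNat at heq
            rw [if_pos (by omega), if_pos (by omega)] at heq
            omega
          · intro t₁ h₁ t₂ h₂ heq
            rw [hc1v] at heq
            unfold freshNat at heq
            rw [if_neg (by omega), if_neg (by omega)] at heq
            omega
          · intro t₁ h₁ t₂ h₂ heq
            rw [hc1v] at heq
            unfold freshNat at heq
            rw [if_pos (by omega), if_neg (by omega)] at heq
            omega
        · -- crossing edge is {n-1, 0}
          have hc1v : (c + 1).val = 0 := by rw [hc1val, hcb]; split_ifs <;> omega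
          have hpre_high : ∀ t, t < tc → a ≤ i.val + t := by
            intro t ht
            by_contra h'
            push_neg at h'
            have h'' := huniq t (by omega) (by omega)
            rw [hvalpre t (by omega)] at h''
            push_neg at h''
            have hwit := huniq (a - 1 - i.val) (by omega) (by omega)
            rw [hvalpre (a - 1 - i.val) (by omega)] at hwit
            push_neg at hwit
            omega
          have hs2a : s₂ ≤ a - 1 := by
            by_contra h'
            push_neg at h'
            have hwit := hpostnc (a - 1) (by omega)
            rw [hvalpost (a - 1) (by omega), hc1v] at hwit
            push_neg at hwit
            omega
          refine ⟨?_, ?_, ?_, ?_, ?_⟩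
          · intro t ht
            have := hpre_high t ht
            unfold freshNat
            rw [if_neg (by omega)]
            omega
          · intro t ht
            rw [hc1v]
            unfold freshNat
            rw [if_pos (by omega)]
            omega
          · intro t₁ h₁ t₂ h₂ heq
            have g1 := hpre_high t₁ h₁
            have g2 := hpre_high t₂ h₂
            unfold freshNat at heq
            rw [if_neg (by omega), if_neg (by omega)] at heq
            omega
          · intro t₁ h₁ t₂ h₂ heq
            rw [hc1v] at heq
            unfold freshNat at heq
            rw [if_pos (by omega), if_pos (by omega)] at heq
            omega
          · intro t₁ h₁ t₂ h₂ heq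
            have g1 := hpre_high t₁ h₁
            rw [hc1v] at heq
            unfold freshNat at heq
            rw [if_neg (by omega), if_pos (by omega)] at heq
            omega
      -- assemble
      rw [SimpleGraph.Walk.edges_append, SimpleGraph.Walk.edges_append, List.map_append,
        List.map_append, haveA, haveB, haveC]
      rw [List.nodup_append, List.nodup_append]
      refine ⟨?_, ⟨?_, ?_, ?_⟩, ?_⟩
      · -- A nodup
        refine List.Nodup.map_on ?_ List.nodup_range
        intro t₁ h₁ t₂ h₂ heq
        rw [List.mem_range] at h₁ h₂
        rw [hFA t₁ h₁, hFA t₂ h₂] at heq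
        simp only [Sum.inl.injEq, Fin.mk.injEq] at heq
        rw [Nat.mod_eq_of_lt (hFA_lt t₁ h₁), Nat.mod_eq_of_lt (hFA_lt t₂ h₂)] at heq
        exact hFA_inj t₁ h₁ t₂ h₂ heq
      · -- B nodup
        exact hp₂rb.map Sum.inr_injective
      · -- C nodup
        refine List.Nodup.map_on ?_ List.nodup_range
        intro t₁ h₁ t₂ h₂ heq
        rw [List.mem_range] at h₁ h₂
        rw [hFC t₁ h₁, hFC t₂ h₂] at heq
        simp only [Sum.inl.injEq, Fin.mk.injEq] at heq
        rw [Nat.mod_eq_of_lt (hFC_lt t₁ h₁), Nat.mod_eq_of_lt (hFC_lt t₂ h₂)] at heq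
        exact hFC_inj t₁ h₁ t₂ h₂ heq
      · -- B and C disjoint
        intro x hxB x' hxC hxx
        subst hxx
        obtain ⟨e, _, rfl⟩ := List.mem_map.mp hxB
        obtain ⟨t, htm, heq⟩ := List.mem_map.mp hxC
        rw [List.mem_range] at htm
        rw [hFC t htm] at heq
        simp at heq
      · -- A disjoint from B ++ C
        intro x hxA x' hxBC hxx
        subst hxx
        obtain ⟨t₁, h₁m, rfl⟩ := List.mem_map.mp hxA
        rw [List.mem_range] at h₁m
        rcases List.mem_append.mp hxBC with hxB | hxC
        · obtain ⟨e, _, heq⟩ := List.mem_map.mp hxB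
          rw [hFA t₁ h₁m] at heq
          simp at heq
        · obtain ⟨t₂, h₂m, heq⟩ := List.mem_map.mp hxC
          rw [List.mem_range] at h₂m
          rw [hFC t₂ h₂m, hFA t₁ h₁m] at heq
          simp only [Sum.inl.injEq, Fin.mk.injEq] at heq
          rw [Nat.mod_eq_of_lt (hFC_lt t₂ h₂m), Nat.mod_eq_of_lt (hFA_lt t₁ h₁m)] at heq
          exact hdisjAC t₁ h₁m t₂ h₂m heq.symm
  · -- no-crossing case
    have hnc : ∀ t, t < d →
        ¬((i + (t : Fin n)).val = a - 1 ∨ (i + (t : Fin n)).val = n - 1) :=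
      fun t ht hP => hcr ⟨t, ht, hP⟩
    have hval : ∀ t ≤ d, (i + (t : Fin n)).val = i.val + t :=
      arc_no_wrap hn i d (fun t ht hv => hnc t ht (Or.inr hv))
    have hphiij : phi n j = phi n i := by
      rw [← hij]
      exact phi_const hn i d hnc
    obtain ⟨q, hql, hqc⟩ := flatpack (phi n j)
    set cw : (G □ cycleGraph n).Walk (u, i) (u, j) :=
      ((walkCW hn2 i d).map (SimpleGraph.boxProdRight G (cycleGraph n) u).toHom).copy (by simp)
        (by rw [hij]; rfl) with hcw
    set gl : (G □ cycleGraph n).Walk (u, j) (v, j) :=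
      (q.map (G.boxProdLeft (cycleGraph n) j).toHom).copy (by simp) (by simp) with hgl
    refine ⟨cw.append gl, ?_, ?_⟩
    · rw [SimpleGraph.Walk.length_append, hcw, hgl]
      simp only [SimpleGraph.Walk.length_copy, SimpleGraph.Walk.length_map]
      rw [walkCW_length, hql]
      omega
    · have haveA : cw.edges.map (col c₂ hn)
          = (List.range d).map (fun t : ℕ =>
              col c₂ hn s(((u : V), i + (t : Fin n)), (u, i + (t : Fin n) + 1))) := by
        rw [hcw, SimpleGraph.Walk.edges_copy, SimpleGraph.Walk.edges_map, walkCW_edges,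
          List.map_map, List.map_map]
        rfl
      have haveB : gl.edges.map (col c₂ hn)
          = (q.edges.map (fun e => c₂ (Sym2.map (fun x => (x, phi n j)) e))).map Sum.inr := by
        rw [hgl, SimpleGraph.Walk.edges_copy, SimpleGraph.Walk.edges_map, List.map_map, List.map_map]
        apply List.map_congr_left
        intro e _
        refine Sym2.ind (fun x y => ?_) e
        exact col_layer c₂ hn x y j
      have hFA : ∀ t, t < d → col c₂ hn s(((u : V), i + (t : Fin n)), (u, i + (t : Fin n) + 1))
          = Sum.inl ⟨freshNat n (i.val + t) % m', Nat.mod_lt _ hm'pos⟩ := by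
        intro t ht
        have h := col_cyc_noncross c₂ hn u (i + (t : Fin n)) (hnc t ht)
        rw [hval t (by omega)] at h
        exact h
      obtain ⟨hFA_lt, hFA_inj⟩ :
          (∀ t < d, freshNat n (i.val + t) < m') ∧
          (∀ t₁, t₁ < d → ∀ t₂, t₂ < d →
            freshNat n (i.val + t₁) = freshNat n (i.val + t₂) → t₁ = t₂) := by
        have hside : (∀ t < d, i.val + t < a - 1) ∨ (∀ t < d, a ≤ i.val + t) := by
          by_cases hlow : i.val < a - 1
          · by_cases hhit : ∀ t < d, i.val + t < a - 1
            · exact Or.inl hhit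
            · exfalso
              push_neg at hhit
              obtain ⟨t0, ht0, ht0'⟩ := hhit
              have hwit := hnc (a - 1 - i.val) (by omega)
              rw [hval (a - 1 - i.val) (by omega)] at hwit
              push_neg at hwit
              omega
          · right
            intro t ht
            have h'' := hnc t ht
            rw [hval t (by omega)] at h''
            push_neg at h''
            omega
        constructor
        · intro t ht
          have h'' := hnc t ht
          rw [hval t (by omega)] at h''
          push_neg at h''
          have hb : i.val + t < n := by rw [← hval t (by omega)]; exact (i + (t : Fin n)).is_lt
          exact freshNat_lt hn _ hb h''.1 h''.2
        · intro t₁ h₁ t₂ h₂ heq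
          rcases hside with hs | hs
          · have g1 := hs t₁ h₁
            have g2 := hs t₂ h₂
            unfold freshNat at heq
            rw [if_pos (by omega), if_pos (by omega)] at heq
            omega
          · have g1 := hs t₁ h₁
            have g2 := hs t₂ h₂
            unfold freshNat at heq
            rw [if_neg (by omega), if_neg (by omega)] at heq
            omega
      rw [SimpleGraph.Walk.edges_append, List.map_append, haveA, haveB, List.nodup_append]
      refine ⟨?_, ?_, ?_⟩
      · refine List.Nodup.map_on ?_ List.nodup_range
        intro t₁ h₁ t₂ h₂ heq
        rw [List.mem_range] at h₁ h₂
        rw [hFA t₁ h₁, hFA t₂ h₂] at heq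
        simp only [Sum.inl.injEq, Fin.mk.injEq] at heq
        rw [Nat.mod_eq_of_lt (hFA_lt t₁ h₁), Nat.mod_eq_of_lt (hFA_lt t₂ h₂)] at heq
        exact hFA_inj t₁ h₁ t₂ h₂ heq
      · exact hqc.map Sum.inr_injective
      · intro x hxA x' hxB hxx
        subst hxx
        obtain ⟨t₁, h₁m, rfl⟩ := List.mem_map.mp hxA
        rw [List.mem_range] at h₁m
        obtain ⟨e, _, heq⟩ := List.mem_map.mp hxB
        rw [hFA t₁ h₁m] at heq
        simp at heq

lemma main_coloring {k : ℕ} {c₂ : Sym2 (V × Fin 2) → Fin k} (hG : G.Connected) (hn : 3 ≤ n)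
    (hc₂ : (G □ cycleGraph 2).IsStrongRainbowColoring c₂) :
    (G □ cycleGraph n).IsStrongRainbowColoring (col c₂ hn) := by
  have hn2 : 2 ≤ n := by omega
  rintro ⟨u, i⟩ ⟨v, j⟩ hne
  have hdist : (G □ cycleGraph n).dist (u, i) (v, j)
      = G.dist u v + min (j - i).val (i - j).val := by
    rw [boxProd_dist hG (cycle_connected hn2), cycle_dist hn2]
  rcases le_total (j - i).val (i - j).val with h | h
  · obtain ⟨W, hlen, hnd⟩ := key hG hn hc₂ u v i j h
    have hl2 : W.length = (G □ cycleGraph n).dist (u, i) (v, j) := by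
      rw [hlen, hdist, min_eq_left h]
    exact ⟨W, W.isPath_of_length_eq_dist hl2, hl2, hnd⟩
  · obtain ⟨W, hlen, hnd⟩ := key hG hn hc₂ v u j i h
    have hl2 : W.reverse.length = (G □ cycleGraph n).dist (u, i) (v, j) := by
      rw [SimpleGraph.Walk.length_reverse, hlen, hdist, min_eq_right h, SimpleGraph.dist_comm]
    refine ⟨W.reverse, W.reverse.isPath_of_length_eq_dist hl2, hl2, ?_⟩
    rw [SimpleGraph.Walk.edges_reverse, List.map_reverse]
    exact List.nodup_reverse.mpr hnd

lemma converse {k : ℕ} (hG : G.Connected) (hn : 3 ≤ n) (cn : Sym2 (V × Fin n) → Fin k)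
    (hcn : (G □ cycleGraph n).IsStrongRainbowColoring cn) :
    (G □ cycleGraph 2).IsStrongRainbowColoring
      (fun e => cn (Sym2.map (fun x => (x.1, Fin.castLE (by omega : 2 ≤ n) x.2)) e)) := by
  have hn2 : 2 ≤ n := by omega
  set emb : Fin 2 → Fin n := Fin.castLE (by omega) with hembdef
  have hadj : ∀ {s t : Fin 2}, s ≠ t → (cycleGraph n).Adj (emb s) (emb t) := by
    intro s t hst
    have h0 : emb 0 = 0 := Fin.ext (by simp [hembdef])
    have h1v : (emb 1).val = 1 := rfl
    apply cycleGraph_adj'.mpr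
    rcases fin2_cases hst with ⟨ha, hb⟩ | ⟨ha, hb⟩ <;> subst ha <;> subst hb
    · right
      rw [h0, sub_zero]
      exact h1v
    · left
      rw [h0, sub_zero]
      exact h1v
  rintro ⟨u, s⟩ ⟨v, t⟩ hne
  by_cases hst : s = t
  · subst hst
    have huv : u ≠ v := by simpa using hne
    obtain ⟨p, _, hplen, hprb⟩ := hcn (u, emb s) (v, emb s) (by simp [huv])
    rw [boxProd_dist hG (cycle_connected hn2), SimpleGraph.dist_self, Nat.add_zero] at hplen
    obtain ⟨_, q, hql, hedges⟩ := flat hG (cycle_connected hn2) p hplen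
    set W : (G □ cycleGraph 2).Walk (u, s) (v, s) :=
      (q.map (G.boxProdLeft (cycleGraph 2) s).toHom).copy (by simp) (by simp) with hW
    have hl2 : W.length = (G □ cycleGraph 2).dist (u, s) (v, s) := by
      rw [hW, SimpleGraph.Walk.length_copy, SimpleGraph.Walk.length_map, hql, dist2 hG, if_pos rfl, Nat.add_zero]
    refine ⟨W, W.isPath_of_length_eq_dist hl2, hl2, ?_⟩
    have hre : W.edges.map
        (fun e => cn (Sym2.map (fun x => (x.1, Fin.castLE (by omega : 2 ≤ n) x.2)) e))
        = p.edges.map cn := by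
      rw [hW, SimpleGraph.Walk.edges_copy, SimpleGraph.Walk.edges_map, hedges, List.map_map, List.map_map]
      apply List.map_congr_left
      intro e _
      refine Sym2.ind (fun x y => ?_) e
      rfl
    rw [hre]
    exact hprb
  · obtain ⟨p, _, hplen, hprb⟩ := hcn (u, emb s) (v, emb t)
      (by
        intro hpair
        apply hst
        have h2 : emb s = emb t := congrArg Prod.snd hpair
        exact Fin.ext (by simpa [hembdef] using congrArg Fin.val h2))
    rw [boxProd_dist hG (cycle_connected hn2),
      SimpleGraph.dist_eq_one_iff_adj.mpr (hadj hst)] at hplen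
    obtain ⟨w, q₁, q₂, hlen12, hedges⟩ := cross hG (cycle_connected hn2) p hplen (hadj hst)
    have hlen12' : q₁.length + q₂.length = G.dist u v := hlen12
    have hadj2 : (G □ cycleGraph 2).Adj (w, s) (w, t) :=
      SimpleGraph.boxProd_adj.mpr (Or.inr ⟨fin2_adj hst, rfl⟩)
    set W : (G □ cycleGraph 2).Walk (u, s) (v, t) :=
      ((q₁.map (G.boxProdLeft (cycleGraph 2) s).toHom).copy (by simp) (by simp)).append
      (SimpleGraph.Walk.cons hadj2 ((q₂.map (G.boxProdLeft (cycleGraph 2) t).toHom).copy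
        (by simp) (by simp))) with hW
    have hl2 : W.length = (G □ cycleGraph 2).dist (u, s) (v, t) := by
      rw [hW, SimpleGraph.Walk.length_append, SimpleGraph.Walk.length_cons,
        SimpleGraph.Walk.length_copy, SimpleGraph.Walk.length_copy, SimpleGraph.Walk.length_map, SimpleGraph.Walk.length_map, dist2 hG, if_neg hst]
      omega
    refine ⟨W, W.isPath_of_length_eq_dist hl2, hl2, ?_⟩
    have hre : W.edges.map
        (fun e => cn (Sym2.map (fun x => (x.1, Fin.castLE (by omega : 2 ≤ n) x.2)) e))
        = p.edges.map cn := by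
      rw [hW, SimpleGraph.Walk.edges_append, SimpleGraph.Walk.edges_cons,
        SimpleGraph.Walk.edges_copy, SimpleGraph.Walk.edges_copy, SimpleGraph.Walk.edges_map, SimpleGraph.Walk.edges_map, hedges,
        List.map_append, List.map_cons, List.map_append, List.map_cons,
        List.map_map, List.map_map, List.map_map, List.map_map]
      congr 1
      · apply List.map_congr_left; intro e _; refine Sym2.ind (fun x y => ?_) e; rfl
      · congr 1
        apply List.map_congr_left; intro e _; refine Sym2.ind (fun x y => ?_) e; rfl
    rw [hre]
    exact hprb

end SRCAux

theorem stmt_5 {V : Type*} (G : SimpleGraph V) (hG : G.Connected) (n : ℕ) (hn : 3 ≤ n) :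
    (G □ cycleGraph n).src ≤ (n - 2 + 1) / 2 + (G □ cycleGraph 2).src := by
  classical
  haveI : NeZero n := ⟨by omega⟩
  have hq : (n - 2 + 1) / 2 = (n - 1) / 2 := by omega
  rw [hq]
  by_cases h2 : {k : ℕ | ∃ c : Sym2 (V × Fin 2) → Fin k,
      (G □ cycleGraph 2).IsStrongRainbowColoring c}.Nonempty
  · have hmem : (G □ cycleGraph 2).src ∈ {k : ℕ | ∃ c : Sym2 (V × Fin 2) → Fin k,
        (G □ cycleGraph 2).IsStrongRainbowColoring c} := Nat.sInf_mem h2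
    obtain ⟨c₂, hc₂⟩ := hmem
    have hsrn : ((n - 1) / 2 + (G □ cycleGraph 2).src) ∈ {k : ℕ | ∃ c : Sym2 (V × Fin n) → Fin k,
        (G □ cycleGraph n).IsStrongRainbowColoring c} := by
      refine ⟨fun e => finSumFinEquiv (SRCAux.col c₂ hn e), ?_⟩
      intro x y hxy
      obtain ⟨p, hp1, hp2, hp3⟩ := SRCAux.main_coloring hG hn hc₂ x y hxy
      refine ⟨p, hp1, hp2, ?_⟩
      have he : p.edges.map (fun e => finSumFinEquiv (SRCAux.col c₂ hn e))
          = (p.edges.map (SRCAux.col c₂ hn)).map finSumFinEquiv := by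
        rw [List.map_map]; rfl
      rw [he]
      exact hp3.map (Equiv.injective _)
    exact Nat.sInf_le hsrn
  · have hSn : {k : ℕ | ∃ c : Sym2 (V × Fin n) → Fin k,
        (G □ cycleGraph n).IsStrongRainbowColoring c} = ∅ := by
      rw [Set.eq_empty_iff_forall_notMem]
      rintro k ⟨cn, hcn⟩
      exact h2 ⟨k, _, SRCAux.converse hG hn cn hcn⟩
    have h0 : (G □ cycleGraph n).src = 0 := by
      unfold SimpleGraph.src
      rw [hSn]
      exact Nat.sInf_empty
    rw [h0]
    exact Nat.zero_le _
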